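/- Let (u₁,v₁,w₁) and (u₂,v₂,w₂) be Pythagorean triples and u₀,v₀ positive integers such that (u₀u₂)²+(v₀u₁)² is a perfect square d² and v₀v₁ = u₀v₂. Then a = u₀u₂, b = v₀u₁, c = v₀v₁ form an Euler brick, with face diagonals d, e = u₀w₂, and f = v₀w₁. -/
import Mathlib

theorem euler_brick_param_thm3
    (u₀ v₀ u₁ v₁ w₁ u₂ v₂ w₂ d : ℕ)
    (hu₀ : 0 < u₀) (hv₀ : 0 < v₀)
    (hu₁ : 0 < u₁) (hv₁ : 0 < v₁) (hw₁ : 0 < w₁)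
    (hu₂ : 0 < u₂) (hv₂ : 0 < v₂) (hw₂ : 0 < w₂)
    (h₁ : u₁ ^ 2 + v₁ ^ 2 = w₁ ^ 2)
    (h₂ : u₂ ^ 2 + v₂ ^ 2 = w₂ ^ 2)
    (hd : (u₀ * u₂) ^ 2 + (v₀ * u₁) ^ 2 = d ^ 2)
    (hc : v₀ * v₁ = u₀ * v₂) :
    (u₀ * u₂) ^ 2 + (v₀ * u₁) ^ 2 = d ^ 2 ∧
    (u₀ * u₂) ^ 2 + (v₀ * v₁) ^ 2 = (u₀ * w₂) ^ 2 ∧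
    (v₀ * u₁) ^ 2 + (v₀ * v₁) ^ 2 = (v₀ * w₁) ^ 2 := by
  refine ⟨hd, ?_, ?_⟩
  · rw [hc]; nlinarith [h₂]
  · nlinarith [h₁]
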